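/- Let W = (Y,X) have law F₀ with Y real and square-integrable, let Γ be a closed linear subspace of L²(μ) (μ the law of X) containing constants, and let γ₀ ∈ Γ satisfy E[ν(X)(Y − γ₀(X))] = 0 for all ν ∈ Γ. Let α₀₁, α₀₂ ∈ Γ, let c₁, c₂ ∈ ℝ, define φ(w_i,w_j) = c₁α₀₁(x_i)(y_i − γ₀(x_i)) + c₂α₀₂(x_j)(y_j − γ₀(x_j)) and its symmetrization φ*(w_i,w_j) = (1/2)(φ(w_i,w_j) + φ(w_j,w_i)). Then the first projection w ↦ ∫ φ*(w,w') F₀(dw') equals (1/2)[c₁α₀₁(x) + c₂α₀₂(x)](y − γ₀(x)). In particular, if c₁α₀₁ + c₂α₀₂ = 0 μ-almost everywhere, then the first projection of φ* vanishes F₀-almost surely (no first-step estimation effect). -/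

import Mathlib

/-!
STATEMENT 3: First (Hájek) projection of the symmetrized U-FSIF
φ(w_i,w_j) = c₁α₀₁(x_i)(y_i − γ₀(x_i)) + c₂α₀₂(x_j)(y_j − γ₀(x_j)),
φ*(w_i,w_j) = ½(φ(w_i,w_j) + φ(w_j,w_i)). Under the orthogonality condition
E[ν(X)(Y − γ₀(X))] = 0 for all ν ∈ Γ (with γ₀, α₀₁, α₀₂ ∈ Γ, Γ a linear subspace of
L² containing constants and Y square-integrable), the first projection
w ↦ ∫ φ*(w,w') F₀(dw') equals ½[c₁α₀₁(x) + c₂α₀₂(x)](y − γ₀(x)); in particular it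
vanishes F₀-a.s. whenever c₁α₀₁ + c₂α₀₂ = 0 a.e. (no first-step estimation effect).
W = (Y,X) is modelled as the identity on ℝ × 𝒳 with law F₀.
-/

open MeasureTheory

theorem first_projection_of_symmetrized_UFSIF
    {𝒳 : Type*} [MeasurableSpace 𝒳]
    (F₀ : Measure (ℝ × 𝒳)) [IsProbabilityMeasure F₀]
    (Γ : Set (𝒳 → ℝ))
    (hΓ_const : ∀ c : ℝ, (fun _ => c) ∈ Γ)
    (hΓ_add : ∀ f ∈ Γ, ∀ g ∈ Γ, (fun x => f x + g x) ∈ Γ)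
    (hΓ_smul : ∀ (c : ℝ), ∀ f ∈ Γ, (fun x => c * f x) ∈ Γ)
    (hΓ_L2 : ∀ f ∈ Γ, MemLp (fun w : ℝ × 𝒳 => f w.2) 2 F₀)
    (hY_L2 : MemLp (fun w : ℝ × 𝒳 => w.1) 2 F₀)
    (γ₀ α₀₁ α₀₂ : 𝒳 → ℝ)
    (hγ₀ : γ₀ ∈ Γ) (hα₀₁ : α₀₁ ∈ Γ) (hα₀₂ : α₀₂ ∈ Γ)
    (horth : ∀ ν ∈ Γ, (∫ w : ℝ × 𝒳, ν w.2 * (w.1 - γ₀ w.2) ∂F₀) = 0)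
    (c₁ c₂ : ℝ)
    (φ φstar : (ℝ × 𝒳) → (ℝ × 𝒳) → ℝ)
    (hφ : ∀ w w' : ℝ × 𝒳,
      φ w w' = c₁ * α₀₁ w.2 * (w.1 - γ₀ w.2) + c₂ * α₀₂ w'.2 * (w'.1 - γ₀ w'.2))
    (hφstar : ∀ w w' : ℝ × 𝒳, φstar w w' = (1/2) * (φ w w' + φ w' w)) :
    (∀ w : ℝ × 𝒳,
        (∫ w', φstar w w' ∂F₀)
          = (1/2) * (c₁ * α₀₁ w.2 + c₂ * α₀₂ w.2) * (w.1 - γ₀ w.2))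
    ∧ ((∀ᵐ w ∂F₀, c₁ * α₀₁ w.2 + c₂ * α₀₂ w.2 = 0) →
        (∀ᵐ w ∂F₀, (∫ w', φstar w w' ∂F₀) = 0)) := by
  set ν : 𝒳 → ℝ := fun x => c₁ * α₀₁ x + c₂ * α₀₂ x with hν
  have hνΓ : ν ∈ Γ :=
    hΓ_add _ (hΓ_smul c₁ _ hα₀₁) _ (hΓ_smul c₂ _ hα₀₂)
  set g : ℝ × 𝒳 → ℝ := fun w => ν w.2 * (w.1 - γ₀ w.2) with hg
  have hg_int : Integrable g F₀ := by
    have h1 : MemLp (fun w : ℝ × 𝒳 => ν w.2) 2 F₀ := hΓ_L2 _ hνΓ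
    have h2 : MemLp (fun w : ℝ × 𝒳 => w.1 - γ₀ w.2) 2 F₀ :=
      hY_L2.sub (hΓ_L2 _ hγ₀)
    have hm : MemLp (g) 1 F₀ := by
      have := h2.smul (p := 2) (q := 2) (r := 1) h1 (hpqr := ⟨by norm_num [ENNReal.inv_two_add_inv_two]⟩)
      simpa [hg, smul_eq_mul, Pi.mul_def] using this
    exact memLp_one_iff_integrable.mp hm
  have hg_zero : (∫ w, g w ∂F₀) = 0 := horth _ hνΓ
  have key : ∀ w : ℝ × 𝒳, (∫ w', φstar w w' ∂F₀)
      = (1/2) * (c₁ * α₀₁ w.2 + c₂ * α₀₂ w.2) * (w.1 - γ₀ w.2) := by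
    intro w
    have hpt : ∀ w' : ℝ × 𝒳, φstar w w' = (1/2) * g w + (1/2) * g w' := by
      intro w'
      rw [hφstar, hφ, hφ]
      simp only [hg, hν]
      ring
    calc (∫ w', φstar w w' ∂F₀) = ∫ w', ((1/2) * g w + (1/2) * g w') ∂F₀ := by
          exact integral_congr_ae (Filter.Eventually.of_forall hpt)
      _ = (∫ _w' : ℝ × 𝒳, (1/2) * g w ∂F₀) + ∫ w', (1/2) * g w' ∂F₀ :=
          integral_add (integrable_const _) (hg_int.const_mul _)
      _ = (1/2) * g w + (1/2) * ∫ w', g w' ∂F₀ := by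
          rw [integral_const, integral_const_mul]; simp
      _ = (1/2) * (c₁ * α₀₁ w.2 + c₂ * α₀₂ w.2) * (w.1 - γ₀ w.2) := by
          rw [hg_zero]; simp [hg, hν]; ring
  refine ⟨key, fun hae => ?_⟩
  filter_upwards [hae] with w hw
  rw [key w, hw]
  ring
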